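/- Let β, η > 0, let F⁰ : ℝ^d → ℝ be β-smooth, let f¹ : ℝ^d → ℝ be convex, and set F := F⁰ + f¹. Fix w, d' ∈ ℝ^d and let y := prox_{ηf¹}(w − η d'). Then for all z ∈ ℝ^d: F(y) ≤ F(z) + ⟨y − z, ∇F⁰(w) − d'⟩ + (β/2 − 1/(2η))‖y − w‖² + (β/2 + 1/(2η))‖z − w‖² − (1/(2η))‖y − z‖². -/

import Mathlib

open scoped RealInnerProductSpace

section aux

variable {d : ℕ}

private lemma line_hasDerivAt (b v : EuclideanSpace ℝ (Fin d)) (t : ℝ) :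
    HasDerivAt (fun s : ℝ => b + s • v) v t := by
  simpa using ((hasDerivAt_id t).smul_const v).const_add b

private lemma comp_hasDerivAt (F0 : EuclideanSpace ℝ (Fin d) → ℝ)
    (hdiff : Differentiable ℝ F0) (b v : EuclideanSpace ℝ (Fin d)) (t : ℝ) :
    HasDerivAt (fun s : ℝ => F0 (b + s • v)) ⟪gradient F0 (b + t • v), v⟫ t := by
  have h1 := ((hdiff (b + t • v)).hasGradientAt).hasFDerivAt
  have := h1.comp_hasDerivAt t (line_hasDerivAt b v t)
  simpa [Function.comp_def, InnerProductSpace.toDual_apply_apply] using this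

private lemma deriv_bound {β : ℝ} (F0 : EuclideanSpace ℝ (Fin d) → ℝ)
    (hsmooth : ∀ x y, ‖gradient F0 x - gradient F0 y‖ ≤ β * ‖x - y‖)
    (b v : EuclideanSpace ℝ (Fin d)) {t : ℝ} (ht : 0 ≤ t) :
    |⟪gradient F0 (b + t • v), v⟫ - ⟪gradient F0 b, v⟫| ≤ β * ‖v‖ ^ 2 * t := by
  have h1 : ⟪gradient F0 (b + t • v) - gradient F0 b, v⟫
      = ⟪gradient F0 (b + t • v), v⟫ - ⟪gradient F0 b, v⟫ := inner_sub_left _ _ _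
  rw [← h1]
  have h2 := abs_real_inner_le_norm (gradient F0 (b + t • v) - gradient F0 b) v
  have h3 := hsmooth (b + t • v) b
  have h4 : ‖(b + t • v) - b‖ = t * ‖v‖ := by
    simp [norm_smul, abs_of_nonneg ht]
  have h5 : (0:ℝ) ≤ ‖v‖ := norm_nonneg v
  rw [h4] at h3
  have h6 := mul_le_mul_of_nonneg_right h3 h5
  have h7 : β * (t * ‖v‖) * ‖v‖ = β * ‖v‖ ^ 2 * t := by ring
  linarith

/-- Descent lemma, both directions. -/
private lemma descent {β : ℝ} (F0 : EuclideanSpace ℝ (Fin d) → ℝ)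
    (hdiff : Differentiable ℝ F0)
    (hsmooth : ∀ x y, ‖gradient F0 x - gradient F0 y‖ ≤ β * ‖x - y‖)
    (a b : EuclideanSpace ℝ (Fin d)) :
    |F0 a - F0 b - ⟪gradient F0 b, a - b⟫| ≤ β / 2 * ‖a - b‖ ^ 2 := by
  set v := a - b with hv
  set c : ℝ := ⟪gradient F0 b, v⟫ with hc
  have hab : b + (1:ℝ) • v = a := by rw [hv]; simp
  rw [abs_le]
  have hcomp := comp_hasDerivAt F0 hdiff b v
  constructor
  · -- lower bound: use monotone on g t = F0(b+tv) - t*c + β/2‖v‖² t²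
    set g : ℝ → ℝ := fun t => F0 (b + t • v) - t * c + β / 2 * ‖v‖ ^ 2 * t ^ 2 with hg
    have hder : ∀ t : ℝ, HasDerivAt g
        (⟪gradient F0 (b + t • v), v⟫ - c + β * ‖v‖ ^ 2 * t) t := by
      intro t
      have h2 : HasDerivAt (fun s : ℝ => s * c) c t := by
        simpa using (hasDerivAt_id t).mul_const c
      have h3 : HasDerivAt (fun s : ℝ => β / 2 * ‖v‖ ^ 2 * s ^ 2)
          (β / 2 * ‖v‖ ^ 2 * (2 * t)) t := by
        simpa using (hasDerivAt_pow 2 t).const_mul (β / 2 * ‖v‖ ^ 2)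
      have := ((hcomp t).sub h2).add h3
      exact this.congr_deriv (by ring)
    have hmono : MonotoneOn g (Set.Icc 0 1) := by
      apply monotoneOn_of_hasDerivWithinAt_nonneg (convex_Icc 0 1)
        (fun t _ => ((hder t).differentiableAt.continuousAt.continuousWithinAt))
        (fun t _ => (hder t).hasDerivWithinAt)
      intro t ht
      rw [interior_Icc] at ht
      have := (deriv_bound F0 hsmooth b v ht.1.le)
      rw [abs_le] at this
      linarith [this.1]
    have h01 : g 0 ≤ g 1 :=
      hmono (Set.left_mem_Icc.mpr zero_le_one) (Set.right_mem_Icc.mpr zero_le_one) zero_le_one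
    simp only [hg, zero_smul, add_zero, hab] at h01
    norm_num at h01
    linarith
  · set g : ℝ → ℝ := fun t => F0 (b + t • v) - t * c - β / 2 * ‖v‖ ^ 2 * t ^ 2 with hg
    have hder : ∀ t : ℝ, HasDerivAt g
        (⟪gradient F0 (b + t • v), v⟫ - c - β * ‖v‖ ^ 2 * t) t := by
      intro t
      have h2 : HasDerivAt (fun s : ℝ => s * c) c t := by
        simpa using (hasDerivAt_id t).mul_const c
      have h3 : HasDerivAt (fun s : ℝ => β / 2 * ‖v‖ ^ 2 * s ^ 2)
          (β / 2 * ‖v‖ ^ 2 * (2 * t)) t := by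
        simpa using (hasDerivAt_pow 2 t).const_mul (β / 2 * ‖v‖ ^ 2)
      have := ((hcomp t).sub h2).sub h3
      exact this.congr_deriv (by ring)
    have hmono : AntitoneOn g (Set.Icc 0 1) := by
      apply antitoneOn_of_hasDerivWithinAt_nonpos (convex_Icc 0 1)
        (fun t _ => ((hder t).differentiableAt.continuousAt.continuousWithinAt))
        (fun t _ => (hder t).hasDerivWithinAt)
      intro t ht
      rw [interior_Icc] at ht
      have := (deriv_bound F0 hsmooth b v ht.1.le)
      rw [abs_le] at this
      linarith [this.2]
    have h01 : g 1 ≤ g 0 :=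
      hmono (Set.left_mem_Icc.mpr zero_le_one) (Set.right_mem_Icc.mpr zero_le_one) zero_le_one
    simp only [hg, zero_smul, add_zero, hab] at h01
    norm_num at h01
    linarith


private lemma prox_ineq {d : ℕ} (η : ℝ) (hη : 0 < η)
    (f1 : EuclideanSpace ℝ (Fin d) → ℝ) (hconv : ConvexOn ℝ Set.univ f1)
    (u y z : EuclideanSpace ℝ (Fin d))
    (hy : ∀ v, η * f1 y + (1 / 2) * ‖y - u‖ ^ 2 ≤ η * f1 v + (1 / 2) * ‖v - u‖ ^ 2) :
    η * (f1 y - f1 z) ≤ ⟪y - u, z - y⟫ := by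
  set s := z - y with hs
  set X : ℝ := ⟪y - u, s⟫ with hX
  set Q : ℝ := ‖s‖ ^ 2 with hQ
  have key : ∀ t : ℝ, t ∈ Set.Ioc (0:ℝ) 1 → η * (f1 y - f1 z) ≤ X + t / 2 * Q := by
    intro t ht
    have hpt : (1 - t) • y + t • z = y + t • s := by
      rw [hs]; rw [smul_sub, sub_smul, one_smul]; abel
    have hcv : f1 ((1 - t) • y + t • z) ≤ (1 - t) * f1 y + t * f1 z :=
      hconv.2 (Set.mem_univ y) (Set.mem_univ z) (by linarith [ht.2]) ht.1.le (by ring)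
    rw [hpt] at hcv
    have hkey := hy (y + t • s)
    have hnorm : ‖y + t • s - u‖ ^ 2 = ‖y - u‖ ^ 2 + 2 * (t * X) + t ^ 2 * Q := by
      have h0 : y + t • s - u = (y - u) + t • s := by abel
      rw [h0, norm_add_sq_real, real_inner_smul_right, norm_smul, Real.norm_eq_abs,
        mul_pow, sq_abs, hX, hQ]
    rw [hnorm] at hkey
    have hcv' : η * f1 (y + t • s) ≤ η * ((1 - t) * f1 y + t * f1 z) :=
      mul_le_mul_of_nonneg_left hcv hη.le
    have h8 : t * (η * (f1 y - f1 z)) ≤ t * (X + t / 2 * Q) := by nlinarith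
    exact le_of_mul_le_mul_left h8 ht.1
  have hQ0 : 0 ≤ Q := sq_nonneg _
  have htend : Filter.Tendsto (fun t : ℝ => X + t / 2 * Q) (nhdsWithin 0 (Set.Ioi 0))
      (nhds X) := by
    have : Filter.Tendsto (fun t : ℝ => X + t / 2 * Q) (nhds 0) (nhds (X + 0 / 2 * Q)) := by
      apply Continuous.tendsto; continuity
    simpa using this.mono_left nhdsWithin_le_nhds
  refine ge_of_tendsto htend ?_
  filter_upwards [Ioc_mem_nhdsGT_of_mem (by norm_num : (0:ℝ) ∈ Set.Ico (0:ℝ) 1)] with t ht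
  exact key t ht

end aux

/-- Key proximal descent lemma: for `β`-smooth `F⁰`, convex `f¹`, `F = F⁰ + f¹`, and
`y = prox_{ηf¹}(w - η d')`, for all `z`:
`F(y) ≤ F(z) + ⟪y - z, ∇F⁰(w) - d'⟫ + (β/2 - 1/(2η))‖y-w‖² + (β/2 + 1/(2η))‖z-w‖²
  - (1/(2η))‖y-z‖²`. -/
theorem stmt3 {d : ℕ} (β η : ℝ) (hβ : 0 < β) (hη : 0 < η)
    (F0 f1 : EuclideanSpace ℝ (Fin d) → ℝ)
    (hdiff : Differentiable ℝ F0)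
    (hsmooth : ∀ x y, ‖gradient F0 x - gradient F0 y‖ ≤ β * ‖x - y‖)
    (hconv : ConvexOn ℝ Set.univ f1)
    (w d' y : EuclideanSpace ℝ (Fin d))
    (hy : ∀ v, η * f1 y + (1 / 2) * ‖y - (w - η • d')‖ ^ 2
        ≤ η * f1 v + (1 / 2) * ‖v - (w - η • d')‖ ^ 2) :
    ∀ z, F0 y + f1 y ≤ F0 z + f1 z + ⟪y - z, gradient F0 w - d'⟫
        + (β / 2 - 1 / (2 * η)) * ‖y - w‖ ^ 2
        + (β / 2 + 1 / (2 * η)) * ‖z - w‖ ^ 2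
        - (1 / (2 * η)) * ‖y - z‖ ^ 2 := by
  intro z
  set G := gradient F0 w with hG
  have hd1 := (abs_le.mp (descent F0 hdiff hsmooth y w)).2
  have hd2 := (abs_le.mp (descent F0 hdiff hsmooth z w)).1
  have hp := prox_ineq η hη f1 hconv (w - η • d') y z hy
  have e1 : ⟪y - z, G - d'⟫ = ⟪G, y - w⟫ - ⟪G, z - w⟫ + ⟪d', z - y⟫ := by
    simp only [inner_sub_left, inner_sub_right]
    rw [real_inner_comm y G, real_inner_comm z G, real_inner_comm y d', real_inner_comm z d']
    ring
  have e2 : ⟪y - (w - η • d'), z - y⟫ = ⟪y - w, z - y⟫ + η * ⟪d', z - y⟫ := by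
    have h0 : y - (w - η • d') = (y - w) + η • d' := by abel
    rw [h0, inner_add_left, real_inner_smul_left]
  have e3 : ⟪y - w, z - y⟫ = (‖z - w‖ ^ 2 - ‖z - y‖ ^ 2 - ‖y - w‖ ^ 2) / 2 := by
    have h0 : z - w = (z - y) + (y - w) := by abel
    rw [h0, norm_add_sq_real, real_inner_comm]
    ring
  have e4 : ‖y - z‖ = ‖z - y‖ := norm_sub_rev _ _
  rw [e2, e3] at hp
  have hp' : f1 y - f1 z ≤
      (1 / (2 * η)) * (‖z - w‖ ^ 2 - ‖z - y‖ ^ 2 - ‖y - w‖ ^ 2) + ⟪d', z - y⟫ := by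
    have heq : (1 / (2 * η)) * (‖z - w‖ ^ 2 - ‖z - y‖ ^ 2 - ‖y - w‖ ^ 2) + ⟪d', z - y⟫
        = ((‖z - w‖ ^ 2 - ‖z - y‖ ^ 2 - ‖y - w‖ ^ 2) / 2 + η * ⟪d', z - y⟫) / η := by
      field_simp
    rw [heq, le_div_iff₀ hη]
    nlinarith [hp]
  rw [e4, e1]
  nlinarith [hd1, hd2, hp']
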